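/- arXiv:2009.06778 — 3 statements merged into one kernel-verified Lean document; each statement's English description precedes it below -/
import Mathlib

section
/- Let Q and T be trajectories in V and s a time interval with |s| > 0 and s ⊆ I(Q). If Sim(Q,T,s) = 1 then the time-restrictions Q[s] and T[s] coincide (i.e., at every time in s both trajectories are defined and are at the same vertex). -/
open MeasureTheory

/-- A trajectory in `V`: a nonempty list of (vertex, interval start, interval end) triples,
with integer endpoints `a < b`, consecutive intervals sharing endpoints, and consecutive
vertices distinct. -/
structure Traj (V : Type*) where
  steps : List (V × ℤ × ℤ)
  nonempty : steps ≠ []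
  valid : ∀ p ∈ steps, p.2.1 < p.2.2
  chain : steps.Chain' (fun p q => p.2.2 = q.2.1 ∧ p.1 ≠ q.1)

/-- Length (Lebesgue measure) of a set of times. -/
noncomputable def ilen (A : Set ℝ) : ℝ := (volume A).toReal

/-- The time interval of a single trajectory step. -/
def stepInt {V : Type*} (p : V × ℤ × ℤ) : Set ℝ := Set.Icc (p.2.1 : ℝ) (p.2.2 : ℝ)

/-- The total interval `I(T)` of a trajectory: from its starting time to its ending time. -/
noncomputable def totalInt {V : Type*} (T : Traj V) : Set ℝ :=
  Set.Icc (((T.steps.head T.nonempty).2.1 : ℝ)) (((T.steps.getLast T.nonempty).2.2 : ℝ))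

/-- The spatio-temporal similarity `Sim(Q,T,s)`. -/
noncomputable def Sim {V : Type*} [MetricSpace V] (Q T : Traj V) (s : Set ℝ) : ℝ :=
  (1 / ilen s) *
    (Q.steps.map (fun q =>
      (T.steps.map (fun p =>
        ilen (s ∩ stepInt p ∩ stepInt q) * Real.exp (-(dist p.1 q.1)))).sum)).sum

/-- The spatio-temporal distance `Dist(Q,T,s) = 1 - Sim(Q,T,s)`. -/
noncomputable def TrajDist {V : Type*} [MetricSpace V] (Q T : Traj V) (s : Set ℝ) : ℝ :=
  1 - Sim Q T s

/-- Trajectory `T` is at vertex `v` at time `x`. -/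
def TrajAt {V : Type*} (T : Traj V) (x : ℝ) (v : V) : Prop :=
  ∃ p ∈ T.steps, x ∈ stepInt p ∧ p.1 = v


open MeasureTheory Set

section Aux
variable {V : Type*}

/-- starts of all steps are bounded below. -/
lemma starts_ge : ∀ (L : List (V × ℤ × ℤ)) (t : ℤ),
    (∀ p ∈ L, p.2.1 < p.2.2) → L.Chain' (fun p q => p.2.2 = q.2.1) →
    (∀ r ∈ L.head?, t ≤ r.2.1) → ∀ q ∈ L, t ≤ q.2.1 := by
  intro L
  induction L with
  | nil => intro t _ _ _ q hq; simp at hq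
  | cons p rest ih =>
    intro t hv hc hh q hq
    have hp : t ≤ p.2.1 := hh p (by simp)
    rcases List.mem_cons.mp hq with rfl | hq'
    · exact hp
    · replace hc := List.isChain_cons.mp hc
      refine ih t (fun r hr => hv r (List.mem_cons_of_mem _ hr)) hc.2 ?_ q hq'
      intro r hr
      have := hc.1 r hr
      have := hv p (by simp)
      omega

lemma list_sum_ne_top {α : Type*} : ∀ (L : List α) (f : α → ENNReal),
    (∀ p ∈ L, f p ≠ ⊤) → (L.map f).sum ≠ ⊤ := by
  intro L
  induction L with
  | nil => simp
  | cons p rest ih =>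
    intro f h
    simp only [List.map_cons, List.sum_cons]
    exact ENNReal.add_ne_top.mpr ⟨h p (by simp), ih f (fun q hq => h q (List.mem_cons_of_mem _ hq))⟩

lemma sum_toReal {α : Type*} : ∀ (L : List α) (f : α → Set ℝ),
    (∀ p ∈ L, volume (f p) ≠ ⊤) →
    (L.map fun p => ilen (f p)).sum = ((L.map fun p => volume (f p)).sum).toReal := by
  intro L
  induction L with
  | nil => simp [ilen]
  | cons p rest ih =>
    intro f h
    simp only [List.map_cons, List.sum_cons]
    rw [ENNReal.toReal_add (h p (by simp))
      (list_sum_ne_top rest _ (fun q hq => h q (List.mem_cons_of_mem _ hq))),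
      ih f (fun q hq => h q (List.mem_cons_of_mem _ hq))]
    rfl

/-- Key upper bound: the step intervals are a.e. disjoint. -/
lemma aux_sum_le : ∀ (L : List (V × ℤ × ℤ)),
    (∀ p ∈ L, p.2.1 < p.2.2) → L.Chain' (fun p q => p.2.2 = q.2.1) →
    ∀ (E : Set ℝ), ((L.map fun p => volume (E ∩ stepInt p)).sum) ≤ volume E := by
  intro L
  induction L with
  | nil => simp
  | cons p rest ih =>
    intro hv hc E
    simp only [List.map_cons, List.sum_cons]
    set c : ℝ := (p.2.2 : ℝ) with hcdef
    have h1 : volume (E ∩ stepInt p) ≤ volume (E ∩ Iio c) := by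
      have hsub : E ∩ stepInt p ⊆ (E ∩ Iio c) ∪ {c} := by
        rintro y ⟨hyE, hy⟩
        rcases lt_or_eq_of_le hy.2 with h | h
        · exact Or.inl ⟨hyE, h⟩
        · exact Or.inr h
      calc volume (E ∩ stepInt p) ≤ volume ((E ∩ Iio c) ∪ {c}) := measure_mono hsub
        _ ≤ volume (E ∩ Iio c) + volume {c} := measure_union_le _ _
        _ = volume (E ∩ Iio c) := by simp [Real.volume_singleton]
    have hrest : ∀ q ∈ rest, (p.2.2 : ℤ) ≤ q.2.1 := by
      replace hc := List.isChain_cons.mp hc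
      refine starts_ge rest p.2.2 (fun r hr => hv r (List.mem_cons_of_mem _ hr)) hc.2 ?_
      intro r hr; exact le_of_eq (hc.1 r hr)
    have h2 : (rest.map fun q => volume (E ∩ stepInt q)).sum ≤ volume (E ∩ Ici c) := by
      have heq : (rest.map fun q => volume (E ∩ stepInt q)) =
          (rest.map fun q => volume ((E ∩ Ici c) ∩ stepInt q)) := by
        refine List.map_congr_left ?_
        intro q hq
        congr 1
        have hsub : stepInt q ⊆ Ici c := by
          intro y hy
          have : (p.2.2 : ℝ) ≤ (q.2.1 : ℝ) := by exact_mod_cast hrest q hq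
          exact le_trans this hy.1
        ext y
        constructor
        · rintro ⟨h1', h2'⟩; exact ⟨⟨h1', hsub h2'⟩, h2'⟩
        · rintro ⟨⟨h1', _⟩, h2'⟩; exact ⟨h1', h2'⟩
      rw [heq]
      exact ih (fun r hr => hv r (List.mem_cons_of_mem _ hr))
        ((List.isChain_cons.mp hc).2) (E ∩ Ici c)
    calc volume (E ∩ stepInt p) + (rest.map fun q => volume (E ∩ stepInt q)).sum
        ≤ volume (E ∩ Iio c) + volume (E ∩ Ici c) := add_le_add h1 h2
      _ = volume E := by
          have := measure_inter_add_diff (μ := volume) E (measurableSet_Ici (a := c))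
          have hdiff : E \ Ici c = E ∩ Iio c := by
            ext y; simp [not_le]
          rw [hdiff] at this
          rw [add_comm]; exact this

/-- Key lower bound: the step intervals cover the total interval. -/
lemma aux_sum_ge : ∀ (L : List (V × ℤ × ℤ)),
    (∀ p ∈ L, p.2.1 < p.2.2) → L.Chain' (fun p q => p.2.2 = q.2.1) →
    ∀ (h : L ≠ []) (E : Set ℝ),
    E ⊆ Icc (((L.head h).2.1 : ℝ)) (((L.getLast h).2.2 : ℝ)) →
    volume E ≤ (L.map fun p => volume (E ∩ stepInt p)).sum := by
  intro L
  induction L with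
  | nil => intro _ _ h; exact absurd rfl h
  | cons p rest ih =>
    intro hv hc h E hE
    simp only [List.map_cons, List.sum_cons]
    rcases rest.eq_nil_or_concat with rfl | hne
    · have : E ∩ stepInt p = E := by
        refine inter_eq_self_of_subset_left ?_
        intro y hy
        exact hE hy
      simp [this]
    · have hrne : rest ≠ [] := by rcases hne with ⟨l, a, rfl⟩; simp
      set c : ℝ := (p.2.2 : ℝ) with hcdef
      have hlast : (p :: rest).getLast h = rest.getLast hrne := List.getLast_cons hrne
      have hhead : (p :: rest).head h = p := rfl
      rw [hhead, hlast] at hE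
      have hheadrest : (rest.head hrne).2.1 = p.2.2 := by
        replace hc := List.isChain_cons.mp hc
        exact (hc.1 (rest.head hrne) (by simp [List.head?_eq_head hrne])).symm
      have hsplit : volume E ≤ volume (E ∩ Iic c) + volume (E ∩ Ici c) := by
        refine le_trans (measure_mono ?_) (measure_union_le _ _)
        intro y hy
        rcases le_total y c with h' | h'
        · exact Or.inl ⟨hy, h'⟩
        · exact Or.inr ⟨hy, h'⟩
      have h1 : volume (E ∩ Iic c) ≤ volume (E ∩ stepInt p) := by
        refine measure_mono ?_
        rintro y ⟨hyE, hyc⟩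
        exact ⟨hyE, (hE hyE).1, hyc⟩
      have h2 : volume (E ∩ Ici c) ≤ (rest.map fun q => volume (E ∩ stepInt q)).sum := by
        have hIH := ih (fun r hr => hv r (List.mem_cons_of_mem _ hr))
          ((List.isChain_cons.mp hc).2) hrne (E ∩ Ici c) ?_
        · refine le_trans hIH (List.sum_le_sum ?_)
          intro q hq
          exact measure_mono (fun y hy => ⟨hy.1.1, hy.2⟩)
        · rintro y ⟨hyE, hyc⟩
          exact ⟨by rw [hheadrest]; exact hyc, (hE hyE).2⟩
      calc volume E ≤ volume (E ∩ Iic c) + volume (E ∩ Ici c) := hsplit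
        _ ≤ _ := add_le_add h1 h2

/-- Cover: lower-closed version. -/
lemma coverA : ∀ (L : List (V × ℤ × ℤ)),
    (∀ p ∈ L, p.2.1 < p.2.2) → L.Chain' (fun p q => p.2.2 = q.2.1) →
    ∀ (h : L ≠ []) (x : ℝ), ((L.head h).2.1 : ℝ) ≤ x → x < ((L.getLast h).2.2 : ℝ) →
    ∃ p ∈ L, (p.2.1 : ℝ) ≤ x ∧ x < (p.2.2 : ℝ) := by
  intro L
  induction L with
  | nil => intro _ _ h; exact absurd rfl h
  | cons p rest ih =>
    intro hv hc h x hx1 hx2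
    rcases rest.eq_nil_or_concat with rfl | hne
    · exact ⟨p, by simp, hx1, by simpa using hx2⟩
    · have hrne : rest ≠ [] := by rcases hne with ⟨l, a, rfl⟩; simp
      rw [List.getLast_cons hrne] at hx2
      by_cases hcase : x < (p.2.2 : ℝ)
      · exact ⟨p, by simp, hx1, hcase⟩
      · push_neg at hcase
        have hheadrest : (rest.head hrne).2.1 = p.2.2 := by
          replace hc := List.isChain_cons.mp hc
          exact (hc.1 (rest.head hrne) (by simp [List.head?_eq_head hrne])).symm
        obtain ⟨q, hq, hq1, hq2⟩ := ih (fun r hr => hv r (List.mem_cons_of_mem _ hr))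
          ((List.isChain_cons.mp hc).2) hrne x (by rw [hheadrest]; exact hcase) hx2
        exact ⟨q, List.mem_cons_of_mem _ hq, hq1, hq2⟩

/-- Cover: upper-closed version. -/
lemma coverB : ∀ (L : List (V × ℤ × ℤ)),
    (∀ p ∈ L, p.2.1 < p.2.2) → L.Chain' (fun p q => p.2.2 = q.2.1) →
    ∀ (h : L ≠ []) (x : ℝ), ((L.head h).2.1 : ℝ) < x → x ≤ ((L.getLast h).2.2 : ℝ) →
    ∃ p ∈ L, (p.2.1 : ℝ) < x ∧ x ≤ (p.2.2 : ℝ) := by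
  intro L
  induction L with
  | nil => intro _ _ h; exact absurd rfl h
  | cons p rest ih =>
    intro hv hc h x hx1 hx2
    rcases rest.eq_nil_or_concat with rfl | hne
    · exact ⟨p, by simp, hx1, by simpa using hx2⟩
    · have hrne : rest ≠ [] := by rcases hne with ⟨l, a, rfl⟩; simp
      rw [List.getLast_cons hrne] at hx2
      by_cases hcase : x ≤ (p.2.2 : ℝ)
      · exact ⟨p, by simp, hx1, hcase⟩
      · push_neg at hcase
        have hheadrest : (rest.head hrne).2.1 = p.2.2 := by
          replace hc := List.isChain_cons.mp hc
          exact (hc.1 (rest.head hrne) (by simp [List.head?_eq_head hrne])).symm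
        obtain ⟨q, hq, hq1, hq2⟩ := ih (fun r hr => hv r (List.mem_cons_of_mem _ hr))
          ((List.isChain_cons.mp hc).2) hrne x (by rw [hheadrest]; exact hcase) hx2
        exact ⟨q, List.mem_cons_of_mem _ hq, hq1, hq2⟩

end Aux

section Real
variable {V : Type*}

lemma ilen_mono {X Y : Set ℝ} (h : X ⊆ Y) (hY : volume Y ≠ ⊤) : ilen X ≤ ilen Y :=
  ENNReal.toReal_mono hY (measure_mono h)

lemma ilen_nonneg (X : Set ℝ) : 0 ≤ ilen X := ENNReal.toReal_nonneg

lemma sum_ilen_le (L : List (V × ℤ × ℤ)) (hv : ∀ p ∈ L, p.2.1 < p.2.2)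
    (hc : L.Chain' (fun p q => p.2.2 = q.2.1)) (E : Set ℝ) (hE : volume E ≠ ⊤) :
    (L.map fun p => ilen (E ∩ stepInt p)).sum ≤ ilen E := by
  rw [sum_toReal L (fun p => E ∩ stepInt p)
    (fun p _ => ne_top_of_le_ne_top hE (measure_mono Set.inter_subset_left))]
  exact ENNReal.toReal_mono hE (aux_sum_le L hv hc E)

lemma sum_ilen_ge (L : List (V × ℤ × ℤ)) (hv : ∀ p ∈ L, p.2.1 < p.2.2)
    (hc : L.Chain' (fun p q => p.2.2 = q.2.1)) (h : L ≠ []) (E : Set ℝ)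
    (hE : volume E ≠ ⊤)
    (hsub : E ⊆ Set.Icc (((L.head h).2.1 : ℝ)) (((L.getLast h).2.2 : ℝ))) :
    ilen E ≤ (L.map fun p => ilen (E ∩ stepInt p)).sum := by
  rw [sum_toReal L (fun p => E ∩ stepInt p)
    (fun p _ => ne_top_of_le_ne_top hE (measure_mono Set.inter_subset_left))]
  refine ENNReal.toReal_mono ?_ (aux_sum_ge L hv hc h E hsub)
  exact list_sum_ne_top L _ (fun p _ => ne_top_of_le_ne_top hE (measure_mono Set.inter_subset_left))

lemma list_eq_of_sum_eq {α : Type*} : ∀ (L : List α) (f g : α → ℝ), (∀ p ∈ L, f p ≤ g p) →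
    (L.map f).sum = (L.map g).sum → ∀ p ∈ L, f p = g p := by
  intro L
  induction L with
  | nil => intro f g _ _ p hp; simp at hp
  | cons p rest ih =>
    intro f g hle heq q hq
    simp only [List.map_cons, List.sum_cons] at heq
    have h1 : f p ≤ g p := hle p (by simp)
    have h2 : (rest.map f).sum ≤ (rest.map g).sum :=
      List.sum_le_sum (fun i hi => hle i (List.mem_cons_of_mem _ hi))
    rcases List.mem_cons.mp hq with rfl | hq'
    · linarith
    · exact ih f g (fun i hi => hle i (List.mem_cons_of_mem _ hi)) (by linarith) q hq'

end Real

/-- If `s ⊆ I(Q)` and `Sim(Q,T,s) = 1`, then the time-restrictions `Q[s]` and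
`T[s]` coincide, i.e., at every time in `s` both trajectories are defined and are at the
same vertex. -/
theorem restrictions_eq_of_sim_eq_one {V : Type*} [MetricSpace V] (Q T : Traj V)
    (a b : ℤ) (hab : a < b) (hs : Set.Icc (a : ℝ) b ⊆ totalInt Q)
    (hsim : Sim Q T (Set.Icc (a : ℝ) b) = 1) :
    ∀ x ∈ Set.Icc (a : ℝ) b, ∃ v : V, TrajAt Q x v ∧ TrajAt T x v := by
  set s : Set ℝ := Set.Icc (a : ℝ) b with hsdef
  have hab' : (a : ℝ) < b := by exact_mod_cast hab
  have hvs : volume s ≠ ⊤ := by rw [hsdef, Real.volume_Icc]; exact ENNReal.ofReal_ne_top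
  have hfin : ∀ X : Set ℝ, X ⊆ s → volume X ≠ ⊤ :=
    fun X hX => ne_top_of_le_ne_top hvs (measure_mono hX)
  have hlens : ilen s = b - a := by
    rw [hsdef]; simp only [ilen, Real.volume_Icc]
    exact ENNReal.toReal_ofReal (by linarith)
  have hlpos : 0 < ilen s := by rw [hlens]; exact sub_pos.mpr hab'
  have chainQ : Q.steps.Chain' (fun p q => p.2.2 = q.2.1) := Q.chain.imp (fun _ _ h => h.1)
  have chainT : T.steps.Chain' (fun p q => p.2.2 = q.2.1) := T.chain.imp (fun _ _ h => h.1)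
  have hs' : s ⊆ Set.Icc (((Q.steps.head Q.nonempty).2.1 : ℝ))
      (((Q.steps.getLast Q.nonempty).2.2 : ℝ)) := hs
  -- the three sums
  have hS1 : (Q.steps.map (fun q =>
      (T.steps.map (fun p =>
        ilen (s ∩ stepInt p ∩ stepInt q) * Real.exp (-(dist p.1 q.1)))).sum)).sum = ilen s := by
    simp only [Sim] at hsim
    field_simp at hsim
    linarith
  have h12 : ∀ q ∈ Q.steps,
      (T.steps.map (fun p =>
        ilen (s ∩ stepInt p ∩ stepInt q) * Real.exp (-(dist p.1 q.1)))).sum ≤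
      (T.steps.map (fun p => ilen (s ∩ stepInt p ∩ stepInt q))).sum := by
    intro q _
    refine List.sum_le_sum (fun p _ => ?_)
    exact mul_le_of_le_one_right (ilen_nonneg _)
      (Real.exp_le_one_iff.mpr (neg_nonpos.mpr dist_nonneg))
  have h23 : ∀ q ∈ Q.steps,
      (T.steps.map (fun p => ilen (s ∩ stepInt p ∩ stepInt q))).sum ≤ ilen (s ∩ stepInt q) := by
    intro q _
    have hmapeq : (T.steps.map (fun p => ilen (s ∩ stepInt p ∩ stepInt q))) =
        (T.steps.map (fun p => ilen ((s ∩ stepInt q) ∩ stepInt p))) :=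
      List.map_congr_left (fun p _ => by rw [Set.inter_right_comm])
    rw [hmapeq]
    exact sum_ilen_le T.steps T.valid chainT _ (hfin _ Set.inter_subset_left)
  have h12s := List.sum_le_sum h12
  have h23s := List.sum_le_sum h23
  have h3 : (Q.steps.map (fun q => ilen (s ∩ stepInt q))).sum ≤ ilen s :=
    sum_ilen_le Q.steps Q.valid chainQ s hvs
  have h0 : ilen s ≤ (Q.steps.map (fun q => ilen (s ∩ stepInt q))).sum :=
    sum_ilen_ge Q.steps Q.valid chainQ Q.nonempty s hvs hs'
  have e12 : (Q.steps.map (fun q =>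
      (T.steps.map (fun p =>
        ilen (s ∩ stepInt p ∩ stepInt q) * Real.exp (-(dist p.1 q.1)))).sum)).sum =
      (Q.steps.map (fun q =>
      (T.steps.map (fun p => ilen (s ∩ stepInt p ∩ stepInt q))).sum)).sum :=
    le_antisymm h12s (by linarith)
  have e23 : (Q.steps.map (fun q =>
      (T.steps.map (fun p => ilen (s ∩ stepInt p ∩ stepInt q))).sum)).sum =
      (Q.steps.map (fun q => ilen (s ∩ stepInt q))).sum :=
    le_antisymm h23s (by linarith)
  have key23 : ∀ q ∈ Q.steps,
      (T.steps.map (fun p => ilen (s ∩ stepInt p ∩ stepInt q))).sum = ilen (s ∩ stepInt q) :=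
    list_eq_of_sum_eq Q.steps _ _ h23 e23
  have key12 := list_eq_of_sum_eq Q.steps _ _ h12 e12
  have hmatch : ∀ q ∈ Q.steps, ∀ p ∈ T.steps,
      ilen (s ∩ stepInt p ∩ stepInt q) ≠ 0 → p.1 = q.1 := by
    intro q hq p hp hne
    have hterm := list_eq_of_sum_eq T.steps _ _
      (fun p' _ => mul_le_of_le_one_right (ilen_nonneg _)
        (Real.exp_le_one_iff.mpr (neg_nonpos.mpr dist_nonneg)))
      (key12 q hq) p hp
    have hexp : Real.exp (-(dist p.1 q.1)) = 1 := by
      have := mul_left_cancel₀ hne (hterm.trans (mul_one _).symm)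
      exact this
    have hd : dist p.1 q.1 = 0 := by
      rw [show (1:ℝ) = Real.exp 0 from Real.exp_zero.symm] at hexp
      have := Real.exp_eq_exp.mp hexp
      linarith
    exact dist_eq_zero.mp hd
  -- pointwise part
  intro x hx
  have haI : (a : ℝ) ∈ totalInt Q := hs (Set.left_mem_Icc.mpr (le_of_lt hab'))
  have hbI : (b : ℝ) ∈ totalInt Q := hs (Set.right_mem_Icc.mpr (le_of_lt hab'))
  obtain ⟨q, hqmem, hxq, hcd, hxc, hxd⟩ : ∃ q ∈ Q.steps, x ∈ stepInt q ∧
      max (a : ℝ) q.2.1 < min (b : ℝ) q.2.2 ∧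
      max (a : ℝ) q.2.1 ≤ x ∧ x ≤ min (b : ℝ) q.2.2 := by
    by_cases hxb : x < (b : ℝ)
    · obtain ⟨q, hq, hq1, hq2⟩ := coverA Q.steps Q.valid chainQ Q.nonempty x
        (le_trans haI.1 hx.1) (lt_of_lt_of_le hxb hbI.2)
      refine ⟨q, hq, ⟨hq1, le_of_lt hq2⟩, ?_, ?_, ?_⟩
      · exact lt_min (max_lt hab' (by linarith)) (max_lt (by linarith [hx.1]) (by linarith))
      · exact max_le hx.1 hq1
      · exact le_min (le_of_lt hxb) (le_of_lt hq2)
    · have hxb' : x = (b : ℝ) := le_antisymm hx.2 (not_lt.mp hxb)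
      obtain ⟨q, hq, hq1, hq2⟩ := coverB Q.steps Q.valid chainQ Q.nonempty x
        (by rw [hxb']; exact lt_of_le_of_lt haI.1 hab') (by rw [hxb']; exact hbI.2)
      refine ⟨q, hq, ⟨le_of_lt hq1, hq2⟩, ?_, ?_, ?_⟩
      · refine lt_min (max_lt hab' (by rw [hxb'] at hq1; linarith [hx.2])) ?_
        refine max_lt ?_ (by subst hxb'; linarith)
        calc (a : ℝ) < b := hab'
          _ = x := hxb'.symm
          _ ≤ q.2.2 := hq2
      · exact max_le hx.1 (le_of_lt hq1)
      · exact le_min hx.2 hq2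
  refine ⟨q.1, ⟨q, hqmem, hxq, rfl⟩, ?_⟩
  by_contra hno
  have hno' : ∀ p ∈ T.steps, x ∈ stepInt p → p.1 ≠ q.1 := by
    intro p hp hxp hpq
    exact hno ⟨p, hp, hxp, hpq⟩
  set δ : ℝ := min ((⌊x⌋ : ℝ) + 1 - x) (x - ((⌈x⌉ : ℝ) - 1)) with hδdef
  have hδ : 0 < δ := by
    refine lt_min ?_ ?_
    · have := Int.lt_floor_add_one x; linarith
    · have := Int.ceil_lt_add_one x; linarith
  set B : Set ℝ := Set.Ioo (x - δ) (x + δ) with hBdef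
  have key_disj : ∀ p : V × ℤ × ℤ, x ∉ stepInt p → stepInt p ∩ B = ∅ := by
    intro p hxp
    rw [Set.eq_empty_iff_forall_notMem]
    rintro y ⟨⟨hy1, hy2⟩, hy3, hy4⟩
    rw [stepInt, Set.mem_Icc, not_and_or, not_le, not_le] at hxp
    rcases hxp with h | h
    · have h1 : ⌊x⌋ < p.2.1 := Int.floor_lt.mpr h
      have h1' : ⌊x⌋ + 1 ≤ p.2.1 := by omega
      have h2 : ((⌊x⌋ : ℝ) + 1) ≤ (p.2.1 : ℝ) := by exact_mod_cast h1'
      have hδ1 : δ ≤ (⌊x⌋ : ℝ) + 1 - x := min_le_left _ _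
      linarith
    · have h1 : p.2.2 < ⌈x⌉ := Int.lt_ceil.mpr h
      have h1' : p.2.2 ≤ ⌈x⌉ - 1 := by omega
      have h2 : (p.2.2 : ℝ) ≤ (⌈x⌉ : ℝ) - 1 := by exact_mod_cast h1'
      have hδ2 : δ ≤ x - ((⌈x⌉ : ℝ) - 1) := min_le_right _ _
      linarith
  have hEsub : s ∩ stepInt q ⊆ s := Set.inter_subset_left
  have hEfin : volume (s ∩ stepInt q) ≠ ⊤ := hfin _ hEsub
  have hij : ∀ p ∈ T.steps,
      ilen (((s ∩ stepInt q) \ B) ∩ stepInt p) = ilen ((s ∩ stepInt q) ∩ stepInt p) := by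
    intro p hp
    by_cases hv1 : p.1 = q.1
    · have hxp : x ∉ stepInt p := fun hxp => hno' p hp hxp hv1
      have hdisj := key_disj p hxp
      congr 1
      ext y
      constructor
      · rintro ⟨⟨hyE, _⟩, hyp⟩; exact ⟨hyE, hyp⟩
      · rintro ⟨hyE, hyp⟩
        refine ⟨⟨hyE, fun hyB => ?_⟩, hyp⟩
        have : y ∈ stepInt p ∩ B := ⟨hyp, hyB⟩
        rw [hdisj] at this
        exact this
    · have h0 : ilen ((s ∩ stepInt q) ∩ stepInt p) = 0 := by
        by_contra hne0
        have hne0' : ilen (s ∩ stepInt p ∩ stepInt q) ≠ 0 := by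
          rw [Set.inter_right_comm] at hne0; exact hne0
        exact hv1 (hmatch q hqmem p hp hne0')
      have hle : ilen (((s ∩ stepInt q) \ B) ∩ stepInt p) ≤ ilen ((s ∩ stepInt q) ∩ stepInt p) :=
        ilen_mono (by intro y hy; exact ⟨hy.1.1, hy.2⟩)
          (hfin _ (Set.inter_subset_left.trans hEsub))
      have := ilen_nonneg (((s ∩ stepInt q) \ B) ∩ stepInt p)
      linarith
  have hsum1 : (T.steps.map fun p => ilen ((s ∩ stepInt q) ∩ stepInt p)).sum
      = ilen (s ∩ stepInt q) := by
    have hmapeq : (T.steps.map fun p => ilen ((s ∩ stepInt q) ∩ stepInt p)) =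
        (T.steps.map fun p => ilen (s ∩ stepInt p ∩ stepInt q)) :=
      List.map_congr_left (fun p _ => by rw [Set.inter_right_comm])
    rw [hmapeq]
    exact key23 q hqmem
  have hle2 : ilen (s ∩ stepInt q) ≤ ilen ((s ∩ stepInt q) \ B) := by
    rw [← hsum1]
    have hmapeq : (T.steps.map fun p => ilen ((s ∩ stepInt q) ∩ stepInt p)) =
        (T.steps.map fun p => ilen (((s ∩ stepInt q) \ B) ∩ stepInt p)) :=
      List.map_congr_left (fun p hp => (hij p hp).symm)
    rw [hmapeq]
    exact sum_ilen_le T.steps T.valid chainT _ (hfin _ (Set.diff_subset.trans hEsub))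
  have hsplit : ilen (s ∩ stepInt q) = ilen ((s ∩ stepInt q) ∩ B) + ilen ((s ∩ stepInt q) \ B) := by
    have hm := measure_inter_add_diff (μ := volume) (s ∩ stepInt q)
      (measurableSet_Ioo : MeasurableSet B)
    rw [ilen, ← hm, ENNReal.toReal_add (hfin _ (Set.inter_subset_left.trans hEsub))
      (hfin _ (Set.diff_subset.trans hEsub))]
    rfl
  have hE : s ∩ stepInt q = Set.Icc (max (a : ℝ) q.2.1) (min (b : ℝ) q.2.2) := by
    rw [hsdef, stepInt, Set.Icc_inter_Icc]
  have hpos : 0 < ilen ((s ∩ stepInt q) ∩ B) := by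
    have hsub2 : Set.Ioo (max (max (a : ℝ) q.2.1) (x - δ)) (min (min (b : ℝ) q.2.2) (x + δ))
        ⊆ (s ∩ stepInt q) ∩ B := by
      intro y hy
      rw [hE]
      constructor
      · constructor
        · exact le_of_lt (lt_of_le_of_lt (le_max_left _ _) hy.1)
        · exact le_of_lt (lt_of_lt_of_le hy.2 (min_le_left _ _))
      · constructor
        · exact lt_of_le_of_lt (le_max_right _ _) hy.1
        · exact lt_of_lt_of_le hy.2 (min_le_right _ _)
    have hlt : max (max (a : ℝ) q.2.1) (x - δ) < min (min (b : ℝ) q.2.2) (x + δ) := by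
      refine lt_min (max_lt hcd (by linarith)) (max_lt (by linarith) (by linarith))
    calc (0 : ℝ) < min (min (b : ℝ) q.2.2) (x + δ) - max (max (a : ℝ) q.2.1) (x - δ) := by linarith
      _ = ilen (Set.Ioo (max (max (a : ℝ) q.2.1) (x - δ)) (min (min (b : ℝ) q.2.2) (x + δ))) := by
          rw [ilen, Real.volume_Ioo, ENNReal.toReal_ofReal (by linarith)]
      _ ≤ ilen ((s ∩ stepInt q) ∩ B) :=
          ilen_mono hsub2 (hfin _ (Set.inter_subset_left.trans hEsub))
    
  linarith
end

section
/- (Triangle inequality) Let Q, T and R be trajectories in V and s a time interval with |s| > 0. If s ⊆ I(Q), then Dist(Q,T,s) ≤ Dist(Q,R,s) + Dist(R,T,s). -/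
open MeasureTheory

set_option linter.unusedSectionVars false
set_option linter.unnecessarySimpa false
set_option linter.unusedVariables false

section Aux
variable {V : Type*} [MetricSpace V]

lemma chain_aux : ∀ (l : List (V × ℤ × ℤ)), (∀ p ∈ l, p.2.1 < p.2.2) →
    l.Chain' (fun p q => p.2.2 = q.2.1 ∧ p.1 ≠ q.1) →
    l.Chain' (fun p q => p.2.2 ≤ q.2.1 ∧ p.2.2 < q.2.2)
  | [], _, _ => List.isChain_nil
  | [a], _, _ => List.isChain_singleton a
  | a :: b :: t, hv, hc => by
      simp only [List.Chain', List.isChain_cons_cons] at hc ⊢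
      have hb := hv b (by simp)
      exact ⟨⟨le_of_eq hc.1.1, by omega⟩,
        chain_aux (b :: t) (fun p hp => hv p (by simp [hp])) hc.2⟩

lemma Traj.pairwise (T : Traj V) :
    T.steps.Pairwise (fun p q => p.2.2 ≤ q.2.1 ∧ p.2.2 < q.2.2) := by
  haveI : IsTrans (V × ℤ × ℤ) (fun p q => p.2.2 ≤ q.2.1 ∧ p.2.2 < q.2.2) :=
    ⟨fun a b c hab hbc => ⟨by omega, by omega⟩⟩
  exact List.isChain_iff_pairwise.mp (chain_aux T.steps T.valid T.chain)

lemma Traj.nodup (T : Traj V) : T.steps.Nodup :=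
  T.pairwise.imp (fun h => fun e => absurd (e ▸ h.2) (lt_irrefl _))

lemma Traj.step_unique (T : Traj V) {x : ℝ} (hx : ∀ n : ℤ, x ≠ (n : ℝ))
    {p q : V × ℤ × ℤ} (hp : p ∈ T.steps) (hq : q ∈ T.steps)
    (hxp : x ∈ stepInt p) (hxq : x ∈ stepInt q) : p = q := by
  by_contra hne
  have hpw : T.steps.Pairwise (fun p q => (p.2.2 ≤ q.2.1 ∧ p.2.2 < q.2.2) ∨
      (q.2.2 ≤ p.2.1 ∧ q.2.2 < p.2.2)) := T.pairwise.imp Or.inl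
  have hsym : Symmetric (fun p q : V × ℤ × ℤ => (p.2.2 ≤ q.2.1 ∧ p.2.2 < q.2.2) ∨
      (q.2.2 ≤ p.2.1 ∧ q.2.2 < p.2.2)) := fun _ _ h => h.symm
  haveI : Std.Symm (fun p q : V × ℤ × ℤ => (p.2.2 ≤ q.2.1 ∧ p.2.2 < q.2.2) ∨
      (q.2.2 ≤ p.2.1 ∧ q.2.2 < p.2.2)) := ⟨fun _ _ h => hsym h⟩
  have h := hpw.forall hp hq hne
  obtain ⟨hxp1, hxp2⟩ := hxp
  obtain ⟨hxq1, hxq2⟩ := hxq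
  rcases h with ⟨h1, _⟩ | ⟨h1, _⟩
  · have : x = (p.2.2 : ℝ) := le_antisymm hxp2 (le_trans (by exact_mod_cast h1) hxq1)
    exact hx p.2.2 this
  · have : x = (q.2.2 : ℝ) := le_antisymm hxq2 (le_trans (by exact_mod_cast h1) hxp1)
    exact hx q.2.2 this

end Aux

set_option linter.unusedSectionVars false

section Aux2
variable {V : Type*} [MetricSpace V]

open Classical in
noncomputable def stepF (p q : V × ℤ × ℤ) (x : ℝ) : ℝ :=
  if x ∈ stepInt p ∧ x ∈ stepInt q then Real.exp (-(dist p.1 q.1)) else 0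

noncomputable def trajF (Q T : Traj V) (x : ℝ) : ℝ :=
  (Q.steps.map (fun q => (T.steps.map (fun p => stepF p q x)).sum)).sum

open Classical in
lemma list_collapse {α : Type*} {l : List α} {P : α → Prop} (c : α → ℝ) {a : α}
    (ha : a ∈ l) (hnd : l.Nodup) (hPa : P a) (hu : ∀ b ∈ l, P b → b = a) :
    (l.map (fun b => if P b then c b else 0)).sum = c a := by
  induction l with
  | nil => cases ha
  | cons hd tl ih =>
    simp only [List.map_cons, List.sum_cons]
    rcases List.mem_cons.mp ha with rfl | hmem
    · rw [if_pos hPa]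
      have hz : (tl.map (fun b => if P b then c b else 0)).sum = 0 := by
        apply List.sum_eq_zero
        intro y hy
        rcases List.mem_map.mp hy with ⟨b, hb, rfl⟩
        have hnb : ¬ P b := fun hPb =>
          (List.nodup_cons.mp hnd).1 ((hu b (List.mem_cons_of_mem _ hb) hPb) ▸ hb)
        simp [hnb]
      rw [hz, add_zero]
    · have hhd : ¬ P hd := fun h =>
        (List.nodup_cons.mp hnd).1 ((hu hd List.mem_cons_self h) ▸ hmem)
      rw [if_neg hhd, zero_add]
      exact ih hmem (List.nodup_cons.mp hnd).2
        (fun b hb hPb => hu b (List.mem_cons_of_mem _ hb) hPb)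

open Classical in
lemma inner_eval (B : Traj V) (q : V × ℤ × ℤ) (x : ℝ) :
    (B.steps.map (fun p => stepF p q x)).sum =
      if x ∈ stepInt q then
        (B.steps.map (fun p => if x ∈ stepInt p then Real.exp (-(dist p.1 q.1)) else 0)).sum
      else 0 := by
  by_cases h : x ∈ stepInt q
  · simp [stepF, h, and_true]
  · simp [stepF, h]

lemma trajF_eval₂ (A B : Traj V) {x : ℝ} (hx : ∀ n : ℤ, x ≠ (n : ℝ))
    {p q : V × ℤ × ℤ} (hq : q ∈ A.steps) (hp : p ∈ B.steps)
    (hxq : x ∈ stepInt q) (hxp : x ∈ stepInt p) :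
    trajF A B x = Real.exp (-(dist p.1 q.1)) := by
  classical
  unfold trajF
  have h1 : ∀ q' : V × ℤ × ℤ, (B.steps.map (fun p' => stepF p' q' x)).sum =
      if x ∈ stepInt q' then Real.exp (-(dist p.1 q'.1)) else 0 := by
    intro q'
    rw [inner_eval]
    by_cases h : x ∈ stepInt q'
    · rw [if_pos h, if_pos h]
      exact list_collapse _ hp B.nodup hxp
        (fun b hb hxb => B.step_unique hx hb hp hxb hxp)
    · rw [if_neg h, if_neg h]
  simp only [h1]
  exact list_collapse _ hq A.nodup hxq
    (fun b hb hxb => A.step_unique hx hb hq hxb hxq)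

lemma trajF_zero_left (A B : Traj V) {x : ℝ}
    (h : ∀ q ∈ A.steps, x ∉ stepInt q) : trajF A B x = 0 := by
  unfold trajF
  apply List.sum_eq_zero
  intro y hy
  rcases List.mem_map.mp hy with ⟨q, hq, rfl⟩
  apply List.sum_eq_zero
  intro z hz
  rcases List.mem_map.mp hz with ⟨p, hp, rfl⟩
  simp [stepF, h q hq]

lemma trajF_zero_right (A B : Traj V) {x : ℝ}
    (h : ∀ p ∈ B.steps, x ∉ stepInt p) : trajF A B x = 0 := by
  unfold trajF
  apply List.sum_eq_zero
  intro y hy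
  rcases List.mem_map.mp hy with ⟨q, hq, rfl⟩
  apply List.sum_eq_zero
  intro z hz
  rcases List.mem_map.mp hz with ⟨p, hp, rfl⟩
  simp [stepF, h p hp]

lemma trajF_nonneg (A B : Traj V) (x : ℝ) : 0 ≤ trajF A B x := by
  apply List.sum_nonneg
  intro y hy
  rcases List.mem_map.mp hy with ⟨q, hq, rfl⟩
  apply List.sum_nonneg
  intro z hz
  rcases List.mem_map.mp hz with ⟨p, hp, rfl⟩
  unfold stepF
  split
  · positivity
  · exact le_refl 0
end Aux2

section Aux3
variable {V : Type*} [MetricSpace V]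

lemma key_pointwise (Q T R : Traj V) {x : ℝ} (hx : ∀ n : ℤ, x ≠ (n : ℝ)) :
    trajF Q R x + trajF R T x ≤ 1 + trajF Q T x := by
  have hQT := trajF_nonneg Q T x
  by_cases hR : ∃ r ∈ R.steps, x ∈ stepInt r
  · obtain ⟨r, hr, hxr⟩ := hR
    by_cases hQ : ∃ q ∈ Q.steps, x ∈ stepInt q
    · obtain ⟨q, hq, hxq⟩ := hQ
      by_cases hT : ∃ t ∈ T.steps, x ∈ stepInt t
      · obtain ⟨t, ht, hxt⟩ := hT
        rw [trajF_eval₂ Q R hx hq hr hxq hxr, trajF_eval₂ R T hx hr ht hxr hxt,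
            trajF_eval₂ Q T hx hq ht hxq hxt]
        have hmul : Real.exp (-(dist t.1 r.1)) * Real.exp (-(dist r.1 q.1)) ≤
            Real.exp (-(dist t.1 q.1)) := by
          rw [← Real.exp_add]
          exact Real.exp_le_exp.mpr (by linarith [dist_triangle t.1 r.1 q.1])
        have h1 : Real.exp (-(dist t.1 r.1)) ≤ 1 :=
          Real.exp_le_one_iff.mpr (neg_nonpos.mpr dist_nonneg)
        have h2 : Real.exp (-(dist r.1 q.1)) ≤ 1 :=
          Real.exp_le_one_iff.mpr (neg_nonpos.mpr dist_nonneg)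
        nlinarith [Real.exp_pos (-(dist t.1 r.1)), Real.exp_pos (-(dist r.1 q.1))]
      · push_neg at hT
        rw [trajF_eval₂ Q R hx hq hr hxq hxr, trajF_zero_right R T hT]
        have h2 : Real.exp (-(dist r.1 q.1)) ≤ 1 :=
          Real.exp_le_one_iff.mpr (neg_nonpos.mpr dist_nonneg)
        linarith
    · push_neg at hQ
      rw [trajF_zero_left Q R hQ]
      by_cases hT : ∃ t ∈ T.steps, x ∈ stepInt t
      · obtain ⟨t, ht, hxt⟩ := hT
        rw [trajF_eval₂ R T hx hr ht hxr hxt]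
        have h1 : Real.exp (-(dist t.1 r.1)) ≤ 1 :=
          Real.exp_le_one_iff.mpr (neg_nonpos.mpr dist_nonneg)
        linarith
      · push_neg at hT
        rw [trajF_zero_right R T hT]
        linarith
  · push_neg at hR
    rw [trajF_zero_right Q R hR, trajF_zero_left R T hR]
    linarith

variable {μ : Measure ℝ}

lemma integrable_list_sum {α : Type*} (l : List α) (g : α → ℝ → ℝ)
    (h : ∀ a ∈ l, Integrable (g a) μ) :
    Integrable (fun x => (l.map (fun a => g a x)).sum) μ := by
  induction l with
  | nil => simpa using integrable_zero ℝ ℝ μ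
  | cons hd tl ih =>
    simp only [List.map_cons, List.sum_cons]
    exact (h hd (by simp)).add (ih (fun a ha => h a (by simp [ha])))

lemma integral_list_sum {α : Type*} (l : List α) (g : α → ℝ → ℝ)
    (h : ∀ a ∈ l, Integrable (g a) μ) :
    ∫ x, (l.map (fun a => g a x)).sum ∂μ = (l.map (fun a => ∫ x, g a x ∂μ)).sum := by
  induction l with
  | nil => simp
  | cons hd tl ih =>
    simp only [List.map_cons, List.sum_cons]
    rw [integral_add (h hd (by simp)) (integrable_list_sum tl g (fun a ha => h a (by simp [ha]))),
      ih (fun a ha => h a (by simp [ha]))]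

lemma measurableSet_stepInt (p : V × ℤ × ℤ) : MeasurableSet (stepInt p) :=
  measurableSet_Icc

lemma stepF_eq_indicator (p q : V × ℤ × ℤ) :
    stepF p q = (stepInt p ∩ stepInt q).indicator (fun _ => Real.exp (-(dist p.1 q.1))) := by
  funext x
  unfold stepF
  by_cases h : x ∈ stepInt p ∧ x ∈ stepInt q
  · rw [if_pos h, Set.indicator_of_mem (Set.mem_inter h.1 h.2)]
  · rw [if_neg h, Set.indicator_of_notMem (by simpa [Set.mem_inter_iff] using h)]

lemma integrable_stepF (p q : V × ℤ × ℤ) {s : Set ℝ} (hfin : volume s ≠ ⊤) :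
    IntegrableOn (stepF p q) s := by
  rw [stepF_eq_indicator]
  exact (integrableOn_const hfin).indicator
    ((measurableSet_stepInt p).inter (measurableSet_stepInt q))

lemma setIntegral_stepF (p q : V × ℤ × ℤ) {s : Set ℝ} (hs : MeasurableSet s) :
    ∫ x in s, stepF p q x =
      ilen (s ∩ stepInt p ∩ stepInt q) * Real.exp (-(dist p.1 q.1)) := by
  rw [stepF_eq_indicator]
  rw [setIntegral_indicator ((measurableSet_stepInt p).inter (measurableSet_stepInt q))]
  rw [setIntegral_const, ← Set.inter_assoc]
  simp [ilen, smul_eq_mul, Measure.real]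

lemma integrable_trajF (A B : Traj V) {s : Set ℝ} (hfin : volume s ≠ ⊤) :
    IntegrableOn (fun x => trajF A B x) s := by
  unfold trajF
  exact integrable_list_sum A.steps _ (fun q hq =>
    integrable_list_sum B.steps _ (fun p hp => integrable_stepF p q hfin))

lemma setIntegral_trajF (A B : Traj V) {s : Set ℝ} (hs : MeasurableSet s)
    (hfin : volume s ≠ ⊤) (h0 : ilen s ≠ 0) :
    ∫ x in s, trajF A B x = Sim A B s * ilen s := by
  unfold trajF
  rw [integral_list_sum A.steps _ (fun q hq =>
    integrable_list_sum B.steps _ (fun p hp => integrable_stepF p q hfin))]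
  have h1 : ∀ q : V × ℤ × ℤ, (∫ x in s, (B.steps.map (fun p => stepF p q x)).sum) =
      (B.steps.map (fun p =>
        ilen (s ∩ stepInt p ∩ stepInt q) * Real.exp (-(dist p.1 q.1)))).sum := by
    intro q
    rw [integral_list_sum B.steps _ (fun p hp => integrable_stepF p q hfin)]
    congr 1
    exact List.map_congr_left (fun p hp => setIntegral_stepF p q hs)
  simp only [h1]
  rw [Sim]
  field_simp

end Aux3

/-- Triangle inequality: Let `Q`, `T` and `R` be trajectories in `V` and
`s` a time interval with `|s| > 0`. If `s ⊆ I(Q)`, then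
`Dist(Q,T,s) ≤ Dist(Q,R,s) + Dist(R,T,s)`. -/
theorem trajDist_triangle {V : Type*} [MetricSpace V] (Q T R : Traj V)
    (a b : ℤ) (hab : a < b) (hs : Set.Icc (a : ℝ) b ⊆ totalInt Q) :
    TrajDist Q T (Set.Icc (a : ℝ) b) ≤
      TrajDist Q R (Set.Icc (a : ℝ) b) + TrajDist R T (Set.Icc (a : ℝ) b) := by
  set s : Set ℝ := Set.Icc (a : ℝ) b with hs_def
  have hms : MeasurableSet s := measurableSet_Icc
  have hfin : volume s ≠ ⊤ := by
    rw [hs_def, Real.volume_Icc]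
    exact ENNReal.ofReal_ne_top
  have hab' : (a : ℝ) < b := by exact_mod_cast hab
  have hlen : ilen s = (b : ℝ) - a := by
    rw [hs_def, ilen, Real.volume_Icc, ENNReal.toReal_ofReal (by linarith)]
  have hLpos : 0 < ilen s := by rw [hlen]; linarith
  have hL0 : ilen s ≠ 0 := ne_of_gt hLpos
  -- a.e. pointwise inequality
  have hbad : volume (Set.range ((↑) : ℤ → ℝ)) = 0 :=
    (Set.countable_range _).measure_zero _
  have hae0 : ∀ᵐ x ∂(volume : Measure ℝ),
      trajF Q R x + trajF R T x ≤ 1 + trajF Q T x := by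
    have h := measure_eq_zero_iff_ae_notMem.mp hbad
    filter_upwards [h] with x hx
    exact key_pointwise Q T R (fun n hn => hx ⟨n, hn.symm⟩)
  have hae : (fun x => trajF Q R x + trajF R T x) ≤ᵐ[volume.restrict s]
      (fun x => 1 + trajF Q T x) := ae_restrict_of_ae hae0
  have hintQR := integrable_trajF Q R hfin
  have hintRT := integrable_trajF R T hfin
  have hintQT := integrable_trajF Q T hfin
  have hint1 : IntegrableOn (fun _ : ℝ => (1 : ℝ)) s :=
    integrableOn_const hfin
  have hmono := integral_mono_ae (hintQR.add hintRT) (hint1.add hintQT) hae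
  simp only [Pi.add_apply] at hmono
  rw [integral_add hintQR hintRT, integral_add hint1 hintQT] at hmono
  rw [setIntegral_trajF Q R hms hfin hL0, setIntegral_trajF R T hms hfin hL0,
    setIntegral_trajF Q T hms hfin hL0, setIntegral_const, smul_eq_mul, mul_one] at hmono
  have hsum : Sim Q R s + Sim R T s ≤ 1 + Sim Q T s := by
    have h2 : (Sim Q R s + Sim R T s) * ilen s ≤ (1 + Sim Q T s) * ilen s := by
      have : volume.real s = ilen s := rfl
      nlinarith [hmono]
    exact le_of_mul_le_mul_right h2 hLpos
  simp only [TrajDist]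
  linarith
end

section
/- (Reverse triangle inequality for pivots) Let P, Q and T be trajectories in V and t a time interval with |t| > 0 and t ⊆ I(P). Then |Dist(Q,P,t) − Dist(P,T,t)| ≤ Dist(Q,T,t). -/
open MeasureTheory
open scoped ENNReal

lemma exp_tri {x y z : ℝ} (hx : 0 ≤ x) (hy : 0 ≤ y) (hz : z ≤ x + y) :
    Real.exp (-x) + Real.exp (-y) ≤ 1 + Real.exp (-z) := by
  have h1 : Real.exp (-x) ≤ 1 := Real.exp_le_one_iff.mpr (by linarith)
  have h2 : Real.exp (-y) ≤ 1 := Real.exp_le_one_iff.mpr (by linarith)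
  have h3 : Real.exp (-x) * Real.exp (-y) ≤ Real.exp (-z) := by
    rw [← Real.exp_add]; exact Real.exp_le_exp.mpr (by linarith)
  nlinarith [Real.exp_pos (-x), Real.exp_pos (-y)]

lemma core_sum (l : List (Set ℝ)) (hm : ∀ A ∈ l, MeasurableSet A)
    (hp : l.Pairwise fun A B => volume (A ∩ B) = 0) (S : Set ℝ) (hS : MeasurableSet S) :
    (l.map fun A => volume (S ∩ A)).sum = volume (S ∩ ⋃ A ∈ l, A) := by
  induction l with
  | nil => simp
  | cons A l ih =>
    have hU : (⋃ B ∈ (A :: l), B) = A ∪ ⋃ B ∈ l, B := by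
      simp [Set.iUnion_or, Set.iUnion_union_distrib, List.mem_cons]
    rw [hU, Set.inter_union_distrib_left]
    have hmU : MeasurableSet (⋃ B ∈ l, B) :=
      MeasurableSet.biUnion (l.finite_toSet).countable
        (fun B hB => hm B (List.mem_cons_of_mem _ hB))
    have hd : volume ((S ∩ A) ∩ (S ∩ ⋃ B ∈ l, B)) = 0 := by
      have hsub : (S ∩ A) ∩ (S ∩ ⋃ B ∈ l, B) ⊆ ⋃ B ∈ l, A ∩ B := by
        intro x hx
        rcases hx with ⟨⟨_, hxA⟩, ⟨_, hxU⟩⟩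
        simp only [Set.mem_iUnion] at hxU ⊢
        obtain ⟨B, hB, hxB⟩ := hxU
        exact ⟨B, hB, hxA, hxB⟩
      refine measure_mono_null hsub ?_
      exact (measure_biUnion_null_iff (l.finite_toSet).countable).mpr
        (fun B hB => List.rel_of_pairwise_cons hp hB)
    rw [measure_union₀ (hS.inter hmU).nullMeasurableSet hd, List.map_cons, List.sum_cons,
      ih (fun B hB => hm B (List.mem_cons_of_mem _ hB)) hp.of_cons]

lemma chainS {V : Type*} : ∀ (l : List (V × ℤ × ℤ)), (∀ p ∈ l, p.2.1 < p.2.2) →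
    l.Chain' (fun p q => p.2.2 = q.2.1 ∧ p.1 ≠ q.1) →
    l.Chain' (fun p q => p.2.2 ≤ q.2.1 ∧ q.2.1 < q.2.2)
  | [], _, _ => by exact List.isChain_nil
  | [a], _, _ => List.isChain_singleton a
  | a :: b :: l, hv, hc => by
    simp only [List.Chain', List.isChain_cons_cons] at hc ⊢
    exact ⟨⟨le_of_eq hc.1.1, hv b (by simp)⟩,
      chainS (b :: l) (fun p hp => hv p (List.mem_cons_of_mem _ hp)) hc.2⟩

lemma traj_pairwise {V : Type*} (R : Traj V) :
    R.steps.Pairwise (fun p q => volume (stepInt p ∩ stepInt q) = 0) := by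
  have : R.steps.Pairwise (fun p q : V × ℤ × ℤ => p.2.2 ≤ q.2.1 ∧ q.2.1 < q.2.2) := by
    haveI : IsTrans (V × ℤ × ℤ) (fun p q => p.2.2 ≤ q.2.1 ∧ q.2.1 < q.2.2) :=
      ⟨fun p q r hpq hqr => ⟨hpq.1.trans (le_of_lt (hpq.2.trans_le hqr.1)), hqr.2⟩⟩
    exact List.isChain_iff_pairwise.mp (chainS R.steps R.valid R.chain)
  refine this.imp ?_
  rintro p q ⟨h, _⟩
  have hsub : stepInt p ∩ stepInt q ⊆ Set.Icc (q.2.1 : ℝ) (p.2.2 : ℝ) := by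
    rintro x ⟨⟨_, h2⟩, ⟨h3, _⟩⟩; exact ⟨h3, h2⟩
  refine measure_mono_null hsub ?_
  rw [Real.volume_Icc, ENNReal.ofReal_eq_zero]
  have : (p.2.2 : ℝ) ≤ (q.2.1 : ℝ) := by exact_mod_cast h
  linarith

lemma traj_cover {V : Type*} : ∀ (l : List (V × ℤ × ℤ)) (h : l ≠ []),
    l.Chain' (fun p q => p.2.2 = q.2.1 ∧ p.1 ≠ q.1) →
    Set.Icc (((l.head h).2.1 : ℝ)) (((l.getLast h).2.2 : ℝ)) ⊆ ⋃ p ∈ l, stepInt p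
  | [], h, _ => absurd rfl h
  | [a], _, _ => by simp [stepInt]
  | a :: b :: l, _, hc => by
    simp only [List.Chain', List.isChain_cons_cons] at hc
    intro x hx
    rcases le_or_gt x (a.2.2 : ℝ) with h1 | h1
    · exact Set.mem_biUnion (by exact List.mem_cons_self) ⟨hx.1, h1⟩
    · have hlast : (a :: b :: l).getLast (by simp) = (b :: l).getLast (by simp) := by
        simp [List.getLast]
      have hx2 : x ∈ Set.Icc (((b :: l).head (by simp)).2.1 : ℝ)
          ((((b :: l).getLast (by simp)).2.2 : ℝ)) := by
        refine ⟨?_, ?_⟩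
        · simp only [List.head_cons]
          rw [← hc.1.1]; exact le_of_lt h1
        · rw [← hlast]; exact hx.2
      have := traj_cover (b :: l) (by simp) hc.2 hx2
      simp only [Set.mem_iUnion] at this ⊢
      obtain ⟨p, hp, hxp⟩ := this
      exact ⟨p, List.mem_cons_of_mem _ hp, hxp⟩

lemma list_sum_ne_top_s11 : ∀ (l : List ℝ≥0∞), (∀ x ∈ l, x ≠ ⊤) → l.sum ≠ ⊤
  | [], _ => by simp
  | x :: l, h => by
    rw [List.sum_cons]
    exact ENNReal.add_ne_top.mpr ⟨h x (by simp),
      list_sum_ne_top_s11 l (fun z hz => h z (List.mem_cons_of_mem _ hz))⟩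

lemma toReal_list_sum : ∀ (l : List ℝ≥0∞), (∀ x ∈ l, x ≠ ⊤) →
    l.sum.toReal = (l.map ENNReal.toReal).sum
  | [], _ => by simp
  | x :: l, h => by
    have hs : l.sum ≠ ⊤ := list_sum_ne_top_s11 l (fun z hz => h z (List.mem_cons_of_mem _ hz))
    rw [List.sum_cons, ENNReal.toReal_add (h x (by simp)) hs, List.map_cons, List.sum_cons,
      toReal_list_sum l (fun z hz => h z (List.mem_cons_of_mem _ hz))]

lemma stepInt_vol_ne_top {V : Type*} (p : V × ℤ × ℤ) : volume (stepInt p) ≠ ⊤ := by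
  rw [stepInt, Real.volume_Icc]; exact ENNReal.ofReal_ne_top

lemma traj_ilen_sum {V : Type*} (R : Traj V) (S : Set ℝ) (hS : MeasurableSet S) :
    (R.steps.map fun p => ilen (S ∩ stepInt p)).sum = ilen (S ∩ ⋃ p ∈ R.steps, stepInt p) := by
  have hcore := core_sum (R.steps.map stepInt)
    (by rintro A hA; rw [List.mem_map] at hA; obtain ⟨p, _, rfl⟩ := hA
        exact measurableSet_Icc)
    ((traj_pairwise R).map stepInt (fun p q h => h)) S hS
  rw [List.map_map] at hcore
  simp only [Function.comp_def] at hcore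
  have hU : (⋃ A ∈ R.steps.map stepInt, A) = ⋃ p ∈ R.steps, stepInt p := by
    ext x; simp only [List.mem_map, Set.mem_iUnion]
    constructor
    · rintro ⟨A, ⟨⟨p, hp, rfl⟩, hx⟩⟩; exact ⟨p, hp, hx⟩
    · rintro ⟨p, hp, hx⟩; exact ⟨stepInt p, ⟨p, hp, rfl⟩, hx⟩
  rw [hU] at hcore
  have : (R.steps.map fun p => ilen (S ∩ stepInt p))
      = (R.steps.map fun p => volume (S ∩ stepInt p)).map ENNReal.toReal := by
    rw [List.map_map]; rfl
  rw [this, ← toReal_list_sum _ (by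
    rintro x hx; rw [List.mem_map] at hx; obtain ⟨p, _, rfl⟩ := hx
    exact fun htop => stepInt_vol_ne_top p
      (top_le_iff.mp (htop ▸ measure_mono Set.inter_subset_right))), hcore]
  rfl

lemma map_sum_fin {α : Type*} (l : List α) (f : α → ℝ) :
    (l.map f).sum = ∑ i : Fin l.length, f (l.get i) := by
  induction l with
  | nil => simp
  | cons x l ih =>
    rw [List.map_cons, List.sum_cons, ih]
    show _ = ∑ i : Fin (l.length + 1), f ((x :: l).get i)
    rw [Fin.sum_univ_succ]
    rfl

lemma stepInt_meas {V : Type*} (p : V × ℤ × ℤ) : MeasurableSet (stepInt p) :=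
  measurableSet_Icc

lemma fin_partition {V : Type*} (P : Traj V) (S : Set ℝ) (hS : MeasurableSet S)
    (hsub : S ⊆ totalInt P) :
    ∑ i : Fin P.steps.length, ilen (S ∩ stepInt (P.steps.get i)) = ilen S := by
  have h := traj_ilen_sum P S hS
  rw [map_sum_fin] at h
  rw [h]
  congr 1
  rw [Set.inter_eq_self_of_subset_left]
  exact hsub.trans (traj_cover P.steps P.nonempty P.chain)

lemma fin_subadd {V : Type*} (R : Traj V) (S : Set ℝ) (hS : MeasurableSet S)
    (hfin : volume S ≠ ⊤) :
    ∑ k : Fin R.steps.length, ilen (S ∩ stepInt (R.steps.get k)) ≤ ilen S := by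
  have h := traj_ilen_sum R S hS
  rw [map_sum_fin] at h
  rw [h]
  exact ENNReal.toReal_mono hfin (measure_mono Set.inter_subset_left)

lemma abstract_key {nP nQ nT : ℕ} (MPT : Fin nP → Fin nT → ℝ) (MQT : Fin nQ → Fin nT → ℝ)
    (MQP : Fin nP → Fin nQ → ℝ) (m3 : Fin nP → Fin nQ → Fin nT → ℝ)
    (EPT : Fin nP → Fin nT → ℝ) (EQT : Fin nQ → Fin nT → ℝ) (EQP : Fin nP → Fin nQ → ℝ)
    (L : ℝ)
    (hm3 : ∀ i j k, 0 ≤ m3 i j k)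
    (hEPT0 : ∀ i k, 0 ≤ EPT i k) (hEPT1 : ∀ i k, EPT i k ≤ 1)
    (hEQP0 : ∀ i j, 0 ≤ EQP i j)
    (hE : ∀ i j k, EPT i k + EQT j k ≤ 1 + EQP i j)
    (hF1 : ∀ j k, ∑ i, m3 i j k = MQT j k)
    (hF2 : ∀ i j, ∑ k, m3 i j k ≤ MQP i j)
    (hF3 : ∀ i k, ∑ j, m3 i j k ≤ MPT i k)
    (hG : ∑ i, ∑ k, MPT i k ≤ L) :
    (∑ i, ∑ k, MPT i k * EPT i k) + (∑ j, ∑ k, MQT j k * EQT j k) ≤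
      L + ∑ i, ∑ j, MQP i j * EQP i j := by
  have h1 : (∑ i, ∑ k, MPT i k * EPT i k) ≤
      ∑ i, ∑ k, ((MPT i k - ∑ j, m3 i j k) + (∑ j, m3 i j k) * EPT i k) := by
    refine Finset.sum_le_sum fun i _ => Finset.sum_le_sum fun k _ => ?_
    have hs : (0:ℝ) ≤ ∑ j, m3 i j k := Finset.sum_nonneg fun j _ => hm3 i j k
    nlinarith [hF3 i k, hEPT1 i k, hEPT0 i k]
  have h2 : (∑ j, ∑ k, MQT j k * EQT j k) = ∑ i, ∑ j, ∑ k, m3 i j k * EQT j k := by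
    calc ∑ j, ∑ k, MQT j k * EQT j k = ∑ j, ∑ k, ∑ i, m3 i j k * EQT j k :=
          Finset.sum_congr rfl fun j _ => Finset.sum_congr rfl fun k _ => by
            rw [← Finset.sum_mul, hF1]
      _ = ∑ j, ∑ i, ∑ k, m3 i j k * EQT j k :=
          Finset.sum_congr rfl fun j _ => Finset.sum_comm
      _ = ∑ i, ∑ j, ∑ k, m3 i j k * EQT j k := Finset.sum_comm
  have h3 : ∑ i, ∑ k, ((MPT i k - ∑ j, m3 i j k) + (∑ j, m3 i j k) * EPT i k) =
      (∑ i, ∑ k, MPT i k) - (∑ i, ∑ j, ∑ k, m3 i j k)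
        + ∑ i, ∑ j, ∑ k, m3 i j k * EPT i k := by
    simp only [Finset.sum_add_distrib, Finset.sum_sub_distrib, Finset.sum_mul]
    congr 1
    · congr 1
      exact Finset.sum_congr rfl fun i _ => Finset.sum_comm
    · exact Finset.sum_congr rfl fun i _ => Finset.sum_comm
  have h4 : (∑ i, ∑ j, ∑ k, m3 i j k * EPT i k) + (∑ i, ∑ j, ∑ k, m3 i j k * EQT j k) ≤
      (∑ i, ∑ j, ∑ k, m3 i j k) + ∑ i, ∑ j, ∑ k, m3 i j k * EQP i j := by
    simp only [← Finset.sum_add_distrib]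
    refine Finset.sum_le_sum fun i _ => Finset.sum_le_sum fun j _ =>
      Finset.sum_le_sum fun k _ => ?_
    nlinarith [hE i j k, hm3 i j k]
  have h5 : (∑ i, ∑ j, ∑ k, m3 i j k * EQP i j) ≤ ∑ i, ∑ j, MQP i j * EQP i j := by
    refine Finset.sum_le_sum fun i _ => Finset.sum_le_sum fun j _ => ?_
    rw [← Finset.sum_mul]
    exact mul_le_mul_of_nonneg_right (hF2 i j) (hEQP0 i j)
  linarith

lemma sim_conv {V : Type*} [MetricSpace V] (X Y : Traj V) (s : Set ℝ) :
    (X.steps.map (fun q =>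
      (Y.steps.map (fun p =>
        ilen (s ∩ stepInt p ∩ stepInt q) * Real.exp (-(dist p.1 q.1)))).sum)).sum =
    ∑ j : Fin X.steps.length, ∑ i : Fin Y.steps.length,
      ilen (s ∩ stepInt (Y.steps.get i) ∩ stepInt (X.steps.get j)) *
        Real.exp (-(dist (Y.steps.get i).1 (X.steps.get j).1)) := by
  rw [map_sum_fin]
  exact Finset.sum_congr rfl fun j _ => map_sum_fin _ _

lemma sim_comm {V : Type*} [MetricSpace V] (Q T : Traj V) (s : Set ℝ) :
    Sim Q T s = Sim T Q s := by
  unfold Sim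
  rw [sim_conv, sim_conv]
  congr 1
  rw [Finset.sum_comm]
  refine Finset.sum_congr rfl fun i _ => Finset.sum_congr rfl fun j _ => ?_
  rw [Set.inter_right_comm, dist_comm]

lemma sim_key {V : Type*} [MetricSpace V] (P Q T : Traj V) (a b : ℤ) (hab : a < b)
    (ht : Set.Icc (a : ℝ) b ⊆ totalInt P) :
    Sim P T (Set.Icc (a : ℝ) b) + Sim Q T (Set.Icc (a : ℝ) b) ≤
      1 + Sim Q P (Set.Icc (a : ℝ) b) := by
  set tI : Set ℝ := Set.Icc (a : ℝ) b with htI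
  have hmt : MeasurableSet tI := measurableSet_Icc
  have hfinT : volume tI ≠ ⊤ := by rw [htI, Real.volume_Icc]; exact ENNReal.ofReal_ne_top
  have hfs : ∀ S : Set ℝ, S ⊆ tI → volume S ≠ ⊤ := by
    intro S hs h
    apply hfinT
    have h2 : volume S ≤ volume tI := measure_mono hs
    rw [h] at h2
    exact top_le_iff.mp h2
  have hba : (a : ℝ) < (b : ℝ) := by exact_mod_cast hab
  have hL : 0 < ilen tI := by
    rw [htI]
    unfold ilen
    rw [Real.volume_Icc, ENNReal.toReal_ofReal (by linarith)]
    linarith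
  set L := ilen tI with hLdef
  -- abbreviations
  set nP := P.steps.length
  set nQ := Q.steps.length
  set nT := T.steps.length
  have key := abstract_key
    (fun (i : Fin nP) (k : Fin nT) =>
      ilen (tI ∩ stepInt (T.steps.get k) ∩ stepInt (P.steps.get i)))
    (fun (j : Fin nQ) (k : Fin nT) =>
      ilen (tI ∩ stepInt (T.steps.get k) ∩ stepInt (Q.steps.get j)))
    (fun (i : Fin nP) (j : Fin nQ) =>
      ilen (tI ∩ stepInt (P.steps.get i) ∩ stepInt (Q.steps.get j)))
    (fun (i : Fin nP) (j : Fin nQ) (k : Fin nT) =>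
      ilen (tI ∩ stepInt (P.steps.get i) ∩ stepInt (Q.steps.get j) ∩ stepInt (T.steps.get k)))
    (fun i k => Real.exp (-(dist (T.steps.get k).1 (P.steps.get i).1)))
    (fun j k => Real.exp (-(dist (T.steps.get k).1 (Q.steps.get j).1)))
    (fun i j => Real.exp (-(dist (P.steps.get i).1 (Q.steps.get j).1)))
    L
    (fun i j k => ENNReal.toReal_nonneg)
    (fun i k => (Real.exp_pos _).le)
    (fun i k => Real.exp_le_one_iff.mpr (by simpa using dist_nonneg))
    (fun i j => (Real.exp_pos _).le)
    (fun i j k => by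
      refine exp_tri dist_nonneg dist_nonneg ?_
      calc dist (P.steps.get i).1 (Q.steps.get j).1
          ≤ dist (P.steps.get i).1 (T.steps.get k).1 +
            dist (T.steps.get k).1 (Q.steps.get j).1 := dist_triangle _ _ _
        _ = dist (T.steps.get k).1 (P.steps.get i).1 +
            dist (T.steps.get k).1 (Q.steps.get j).1 := by rw [dist_comm])
    (fun j k => by
      have hsub : tI ∩ stepInt (Q.steps.get j) ∩ stepInt (T.steps.get k) ⊆ totalInt P :=
        (Set.inter_subset_left.trans Set.inter_subset_left).trans ht
      have hp := fin_partition P _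
        ((hmt.inter (stepInt_meas _)).inter (stepInt_meas _)) hsub
      calc (∑ i : Fin nP, ilen (tI ∩ stepInt (P.steps.get i) ∩ stepInt (Q.steps.get j) ∩
              stepInt (T.steps.get k)))
          = ∑ i : Fin nP, ilen ((tI ∩ stepInt (Q.steps.get j) ∩ stepInt (T.steps.get k)) ∩
              stepInt (P.steps.get i)) :=
            Finset.sum_congr rfl fun i _ => congrArg ilen (by
              ext x; simp only [Set.mem_inter_iff]; tauto)
        _ = ilen (tI ∩ stepInt (Q.steps.get j) ∩ stepInt (T.steps.get k)) := hp
        _ = ilen (tI ∩ stepInt (T.steps.get k) ∩ stepInt (Q.steps.get j)) :=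
            congrArg ilen (by ext x; simp only [Set.mem_inter_iff]; tauto))
    (fun i j => by
      exact fin_subadd T _ ((hmt.inter (stepInt_meas _)).inter (stepInt_meas _))
        (hfs _ (Set.inter_subset_left.trans Set.inter_subset_left)))
    (fun i k => by
      have hsa := fin_subadd Q (tI ∩ stepInt (T.steps.get k) ∩ stepInt (P.steps.get i))
        ((hmt.inter (stepInt_meas _)).inter (stepInt_meas _))
        (hfs _ (Set.inter_subset_left.trans Set.inter_subset_left))
      refine le_trans (le_of_eq ?_) hsa
      exact Finset.sum_congr rfl fun j _ => congrArg ilen (by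
        ext x; simp only [Set.mem_inter_iff]; tauto))
    (by
      have hstep : ∀ i : Fin nP,
          (∑ k : Fin nT, ilen (tI ∩ stepInt (T.steps.get k) ∩ stepInt (P.steps.get i)))
            ≤ ilen (tI ∩ stepInt (P.steps.get i)) := by
        intro i
        have hsa := fin_subadd T (tI ∩ stepInt (P.steps.get i))
          (hmt.inter (stepInt_meas _)) (hfs _ Set.inter_subset_left)
        refine le_trans (le_of_eq ?_) hsa
        exact Finset.sum_congr rfl fun k _ => congrArg ilen (by
          ext x; simp only [Set.mem_inter_iff]; tauto)
      calc (∑ i : Fin nP, ∑ k : Fin nT,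
              ilen (tI ∩ stepInt (T.steps.get k) ∩ stepInt (P.steps.get i)))
          ≤ ∑ i : Fin nP, ilen (tI ∩ stepInt (P.steps.get i)) :=
            Finset.sum_le_sum fun i _ => hstep i
        _ = ilen tI := fin_partition P tI hmt ht
        _ ≤ L := le_refl L)
  -- convert Sims
  unfold Sim
  rw [sim_conv, sim_conv, sim_conv]
  rw [← hLdef]
  have hswap : (∑ j : Fin nQ, ∑ i : Fin nP,
      ilen (tI ∩ stepInt (P.steps.get i) ∩ stepInt (Q.steps.get j)) *
        Real.exp (-(dist (P.steps.get i).1 (Q.steps.get j).1)))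
      = ∑ i : Fin nP, ∑ j : Fin nQ,
      ilen (tI ∩ stepInt (P.steps.get i) ∩ stepInt (Q.steps.get j)) *
        Real.exp (-(dist (P.steps.get i).1 (Q.steps.get j).1)) := Finset.sum_comm
  rw [hswap]
  have h1L : (1 / L) * L = 1 := one_div_mul_cancel hL.ne'
  have t1 := mul_le_mul_of_nonneg_left key (one_div_nonneg.mpr hL.le)
  rw [mul_add, mul_add, h1L] at t1
  exact t1

/-- Reverse triangle inequality for pivots: Let `P`, `Q` and `T` be
trajectories in `V` and `t` a time interval with `|t| > 0` and `t ⊆ I(P)`. Then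
`|Dist(Q,P,t) − Dist(P,T,t)| ≤ Dist(Q,T,t)`. -/
theorem trajDist_reverse_triangle {V : Type*} [MetricSpace V] (P Q T : Traj V)
    (a b : ℤ) (hab : a < b) (ht : Set.Icc (a : ℝ) b ⊆ totalInt P) :
    |TrajDist Q P (Set.Icc (a : ℝ) b) - TrajDist P T (Set.Icc (a : ℝ) b)| ≤
      TrajDist Q T (Set.Icc (a : ℝ) b) := by
  have h1 := sim_key P Q T a b hab ht
  have h2 := sim_key P T Q a b hab ht
  rw [sim_comm P Q, sim_comm T Q, sim_comm T P] at h2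
  unfold TrajDist
  rw [abs_le]
  constructor <;> [skip; skip] <;> linarith
end
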